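/- Suppose Σ = I_d, so that M = σ² + d, and let 1_n ∈ ℝⁿ denote the all-ones vector. Set c = (1_nᵀ r) / (n(d + σ² + 1) + 1_nᵀ R 1_n). Then for every P ∈ ℝ^{d×d}, L(P, 1_n) ≥ (d + σ²) − c·d·(1_nᵀ r), with equality if and only if P = c·I_d. -/

import Mathlib

open Finset Matrix

/-- The closed-form WPGD risk
`L(P, ω) = M − 2·tr(Σ²P)·(ωᵀr) + M·‖ω‖²·tr(ΣPᵀΣP) + (‖ω‖² + ωᵀRω)·tr(Σ²PᵀΣP)`. -/
noncomputable def Lrisk {d n : ℕ} (Sg : Matrix (Fin d) (Fin d) ℝ)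
    (R : Matrix (Fin n) (Fin n) ℝ) (r : Fin n → ℝ) (M : ℝ)
    (P : Matrix (Fin d) (Fin d) ℝ) (w : Fin n → ℝ) : ℝ :=
  M - 2 * Matrix.trace (Sg ^ 2 * P) * (w ⬝ᵥ r)
    + M * (∑ i, w i ^ 2) * Matrix.trace (Sg * Pᵀ * Sg * P)
    + ((∑ i, w i ^ 2) + w ⬝ᵥ (R *ᵥ w)) * Matrix.trace (Sg ^ 2 * Pᵀ * Sg * P)

/-- For `Σ = I_d` and the all-ones weighting `1_n`, with
`c = (1ᵀr)/(n(d + σ² + 1) + 1ᵀR1)`, every `P` satisfies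
`L(P, 1_n) ≥ (d + σ²) − c·d·(1ᵀr)`, with equality iff `P = c·I_d`. -/
theorem stmt17 (d n : ℕ) (hd : 0 < d) (hn : 0 < n) (σ : ℝ) (hσ : 0 ≤ σ)
    (Sg : Matrix (Fin d) (Fin d) ℝ) (hSgsym : Sg.IsSymm) (hSgpd : Sg.PosDef)
    (R : Matrix (Fin n) (Fin n) ℝ) (hRsym : R.IsSymm) (hRpsd : R.PosSemidef)
    (r : Fin n → ℝ)
    (M : ℝ) (hM : M = σ ^ 2 + Matrix.trace Sg)
    (hSgI : Sg = 1)
    (c : ℝ)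
    (hc : c = (∑ i, r i) / ((n : ℝ) * ((d : ℝ) + σ ^ 2 + 1) + ∑ i, ∑ j, R i j)) :
    ∀ P : Matrix (Fin d) (Fin d) ℝ,
      ((d : ℝ) + σ ^ 2) - c * (d : ℝ) * (∑ i, r i) ≤ Lrisk Sg R r M P (fun _ => 1) ∧
      (Lrisk Sg R r M P (fun _ => 1) = ((d : ℝ) + σ ^ 2) - c * (d : ℝ) * (∑ i, r i)
        ↔ P = c • (1 : Matrix (Fin d) (Fin d) ℝ)) := by
  subst hSgI
  intro P
  set s : ℝ := ∑ i, r i with hs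
  set q : ℝ := ∑ i, ∑ j, R i j with hq
  have hq0 : 0 ≤ q := by
    have h := hRpsd.dotProduct_mulVec_nonneg (fun _ => 1)
    simpa [dotProduct, Matrix.mulVec, hq] using h
  have hn1 : (1:ℝ) ≤ (n:ℝ) := by exact_mod_cast hn
  have hd0 : (0:ℝ) ≤ (d:ℝ) := by positivity
  set K : ℝ := (n:ℝ) * ((d:ℝ) + σ^2 + 1) + q with hKdef
  have hK : (0:ℝ) < K := by
    have : (1:ℝ) ≤ (d:ℝ) + σ^2 + 1 := by nlinarith [sq_nonneg σ]
    nlinarith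
  have hcK : c * K = s := by
    rw [hc, hKdef, hq]
    field_simp
    have hK' : (n:ℝ) * ((d:ℝ) + σ^2 + 1) + ∑ i, ∑ j, R i j ≠ 0 := by
      rw [← hq, ← hKdef]; exact hK.ne'
    exact mul_div_cancel_right₀ s hK'
  have hM' : M = σ^2 + d := by simpa using hM
  have hT : Matrix.trace (Pᵀ * P) = ∑ i, ∑ j, P i j ^ 2 := by
    rw [Finset.sum_comm]
    simp [Matrix.trace, Matrix.diag, Matrix.mul_apply, sq]
  have htr : Matrix.trace P = ∑ i, P i i := rfl
  have hexp : ∀ i j : Fin d,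
      (P i j - c * (1 : Matrix (Fin d) (Fin d) ℝ) i j)^2
        = P i j ^ 2 - 2*c*(if i = j then P i j else 0) + c^2 * (if i = j then 1 else 0) := by
    intro i j
    by_cases h : i = j <;> simp [Matrix.one_apply, h] <;> ring
  have hsum : ∑ i, ∑ j, (P i j - c * (1 : Matrix (Fin d) (Fin d) ℝ) i j)^2
      = (∑ i, ∑ j, P i j ^ 2) - 2*c*(∑ i, P i i) + c^2 * d := by
    have e1 : ∀ i : Fin d, ∑ j, (P i j - c * (1 : Matrix (Fin d) (Fin d) ℝ) i j)^2
        = (∑ j, P i j ^ 2) - 2*c*P i i + c^2 := by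
      intro i
      rw [Finset.sum_congr rfl (fun j _ => hexp i j)]
      simp [Finset.sum_add_distrib, Finset.sum_sub_distrib]
    simp only [e1]
    rw [Finset.sum_add_distrib, Finset.sum_sub_distrib]
    rw [show ∀ f : Fin d → ℝ, ∑ i, 2*c*f i = 2*c*∑ i, f i from fun f => by rw [Finset.mul_sum]]
    simp [Finset.card_univ]
    ring
  have hL : Lrisk 1 R r M P (fun _ => 1)
      = ((d:ℝ) + σ^2) - c * d * s
        + K * ∑ i, ∑ j, (P i j - c * (1 : Matrix (Fin d) (Fin d) ℝ) i j)^2 := by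
    simp only [Lrisk, one_pow, Matrix.one_mul, Matrix.mul_one, hT, htr, hsum]
    have hw : ((fun _ : Fin n => (1:ℝ)) ⬝ᵥ r) = s := by simp [dotProduct, hs]
    have hw2 : (∑ _x : Fin n, (1:ℝ)) = (n:ℝ) := by simp
    have hwR : ((fun _ : Fin n => (1:ℝ)) ⬝ᵥ (R *ᵥ fun _ => (1:ℝ))) = q := by
      simp [dotProduct, Matrix.mulVec, hq]
    rw [hw, hw2, hwR, hM']
    linear_combination (2 * (∑ i, P i i) - c * (d:ℝ)) * hcK
      - (∑ i, ∑ j, P i j ^ 2) * hKdef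
  have hnn : (0:ℝ) ≤ ∑ i, ∑ j, (P i j - c * (1 : Matrix (Fin d) (Fin d) ℝ) i j)^2 := by
    positivity
  have hKS := mul_nonneg hK.le hnn
  constructor
  · rw [hL]; linarith
  · rw [hL]
    constructor
    · intro h
      have hKS0 : K * ∑ i, ∑ j, (P i j - c * (1 : Matrix (Fin d) (Fin d) ℝ) i j)^2 = 0 := by
        linarith
      have hzero : ∑ i, ∑ j, (P i j - c * (1 : Matrix (Fin d) (Fin d) ℝ) i j)^2 = 0 := by
        rcases mul_eq_zero.mp hKS0 with h' | h'
        · exact absurd h' (ne_of_gt hK)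
        · exact h'
      ext i j
      have h1 : ∀ i ∈ Finset.univ, (0:ℝ) ≤ ∑ j, (P i j - c * (1 : Matrix (Fin d) (Fin d) ℝ) i j)^2 :=
        fun i _ => Finset.sum_nonneg fun j _ => sq_nonneg _
      have h2 := (Finset.sum_eq_zero_iff_of_nonneg h1).mp hzero i (Finset.mem_univ i)
      have h4 := (Finset.sum_eq_zero_iff_of_nonneg
        (fun j _ => sq_nonneg (P i j - c * (1 : Matrix (Fin d) (Fin d) ℝ) i j))).mp h2 j
        (Finset.mem_univ j)
      have h5 : P i j - c * (1 : Matrix (Fin d) (Fin d) ℝ) i j = 0 :=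
        (pow_eq_zero_iff two_ne_zero).mp h4
      have h6 : P i j = c * (1 : Matrix (Fin d) (Fin d) ℝ) i j := by linarith
      simpa [Matrix.smul_apply] using h6
    · intro h
      subst h
      have hz : ∑ i, ∑ j, ((c • (1 : Matrix (Fin d) (Fin d) ℝ)) i j
          - c * (1 : Matrix (Fin d) (Fin d) ℝ) i j)^2 = 0 := by
        simp [Matrix.smul_apply]
      rw [hz]
      ring
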